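/- The isometry group Isom(L_z) of the Gaussian lattice L_z has exactly 96 elements. -/

import Mathlib

/-- The imaginary unit `i` in the Gaussian integers `ℤ[i]`. -/
def gi : GaussianInt := Zsqrtd.sqrtd

/-- The underlying `ℤ[i]`-module of the Gaussian lattice `L_z`. -/
abbrev Lz : Type := GaussianInt × GaussianInt

/-- The Hermitian form of `L_z`, given by the matrix `[[-2, 1-i], [1+i, -2]]`;
conjugate-linear in the first argument, linear in the second. -/
def hz (x y : Lz) : GaussianInt :=
  star x.1 * (-2) * y.1 + star x.1 * (1 - gi) * y.2 +
    star x.2 * (1 + gi) * y.1 + star x.2 * (-2) * y.2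

/-- An isometry of `L_z`: a `ℤ[i]`-linear bijection preserving the form `hz`. -/
def IsIsomLz (A : Lz → Lz) : Prop :=
  Function.Bijective A ∧ (∀ x y : Lz, A (x + y) = A x + A y) ∧
    (∀ (c : GaussianInt) (x : Lz), A (c • x) = c • A x) ∧
    ∀ x y : Lz, hz (A x) (A y) = hz x y

/-- An involutive anti-isometry of `L_z`: an additive bijection `ν` with
`ν (c • v) = c̄ • ν v`, `hz (ν x) (ν y) = conj (hz x y)` and `ν ∘ ν = id`. -/
def IsInvAntiIsomLz (ν : Lz → Lz) : Prop :=
  Function.Bijective ν ∧ (∀ x y : Lz, ν (x + y) = ν x + ν y) ∧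
    (∀ (c : GaussianInt) (x : Lz), ν (c • x) = star c • ν x) ∧
    (∀ x y : Lz, hz (ν x) (ν y) = star (hz x y)) ∧
    ∀ x : Lz, ν (ν x) = x

/-- The anti-isometry `κ₁ : (x₁, x₂) ↦ (−x̄₂, −x̄₁)` of `L_z`. -/
def kappa1 (x : Lz) : Lz := (-(star x.2), -(star x.1))

/-- The anti-isometry `κ₃ : (x₁, x₂) ↦ (i·x̄₁, −x̄₂)` of `L_z`. -/
def kappa3 (x : Lz) : Lz := (gi * star x.1, -(star x.2))

namespace Stmt8Aux

/-- The linear map on `Lz` with matrix columns `p.1`, `p.2`, applied to `x`. -/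
def applyP (p : Lz × Lz) (x : Lz) : Lz := x.1 • p.1 + x.2 • p.2

/-- Composition of two matrices (pairs of columns). -/
def compP (p q : Lz × Lz) : Lz × Lz := (applyP p q.1, applyP p q.2)

/-- The identity matrix as a pair of columns. -/
def ee : Lz × Lz := ((1, 0), (0, 1))

/-- Gaussian integers with real and imaginary parts in `[-1, 1]`. -/
noncomputable def V : Finset GaussianInt :=
  (Finset.Icc (-1:ℤ) 1 ×ˢ Finset.Icc (-1:ℤ) 1).image fun a => ⟨a.1, a.2⟩

/-- Vectors of `Lz` of `hz`-norm `-2` (with small coordinates). -/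
noncomputable def N2 : Finset Lz := (V ×ˢ V).filter fun a => hz a a = -2

/-- Pairs of columns forming a matrix whose Gram matrix for `hz` is the right one. -/
noncomputable def T1 : Finset (Lz × Lz) := (N2 ×ˢ N2).filter fun p => hz p.1 p.2 = 1 - gi

/-- Invertible such matrices. -/
noncomputable def T : Finset (Lz × Lz) := T1.filter fun p => ∃ q ∈ T1, compP p q = ee ∧ compP q p = ee

lemma applyP_eq (p : Lz × Lz) (x : Lz) :
    applyP p x = (x.1 * p.1.1 + x.2 * p.2.1, x.1 * p.1.2 + x.2 * p.2.2) := by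
  simp [applyP, Prod.ext_iff, smul_eq_mul]

lemma applyP_add (p : Lz × Lz) (x y : Lz) :
    applyP p (x + y) = applyP p x + applyP p y := by
  simp [applyP_eq, Prod.ext_iff]; constructor <;> ring

lemma applyP_smul (p : Lz × Lz) (c : GaussianInt) (x : Lz) :
    applyP p (c • x) = c • applyP p x := by
  simp [applyP_eq, Prod.ext_iff, smul_eq_mul]; constructor <;> ring

lemma applyP_comp (p q : Lz × Lz) (x : Lz) :
    applyP p (applyP q x) = applyP (compP p q) x := by
  simp [applyP_eq, compP, Prod.ext_iff]; constructor <;> ring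

lemma applyP_ee (x : Lz) : applyP ee x = x := by
  simp [applyP_eq, ee]

lemma applyP_e1 (p : Lz × Lz) : applyP p (1, 0) = p.1 := by
  simp [applyP_eq]

lemma applyP_e2 (p : Lz × Lz) : applyP p (0, 1) = p.2 := by
  simp [applyP_eq]

lemma decomp (x : Lz) :
    x = x.1 • ((1:GaussianInt), (0:GaussianInt)) + x.2 • ((0:GaussianInt), (1:GaussianInt)) := by
  have h : applyP ((1,0),(0,1)) x = x := applyP_ee x
  simp only [applyP] at h
  exact h.symm

lemma hz_star (x y : Lz) : hz y x = star (hz x y) := by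
  simp only [hz, star_add, star_mul, star_star, star_sub, star_one, star_neg, star_ofNat]
  have : star gi = -gi := rfl
  rw [this]; ring

lemma hz_applyP (p : Lz × Lz) (x y : Lz) :
    hz (applyP p x) (applyP p y) =
      star x.1 * y.1 * hz p.1 p.1 + star x.1 * y.2 * hz p.1 p.2 +
      star x.2 * y.1 * hz p.2 p.1 + star x.2 * y.2 * hz p.2 p.2 := by
  simp only [hz, applyP_eq, star_add, star_mul]
  ring

lemma mem_V {z : GaussianInt} (h1 : -1 ≤ z.re) (h2 : z.re ≤ 1) (h3 : -1 ≤ z.im)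
    (h4 : z.im ≤ 1) : z ∈ V := by
  refine Finset.mem_image.2 ⟨(z.re, z.im), ?_, rfl⟩
  simp [Finset.mem_Icc, h1, h2, h3, h4]

lemma norm2_mem {a : Lz} (h : hz a a = -2) : a ∈ N2 := by
  refine Finset.mem_filter.2 ⟨Finset.mem_product.2 ⟨?_, ?_⟩, h⟩ <;>
  · obtain ⟨⟨p, q⟩, r, s⟩ := a
    rw [Zsqrtd.ext_iff] at h
    simp only [hz, gi, Zsqrtd.re_mul, Zsqrtd.im_mul, Zsqrtd.re_add, Zsqrtd.im_add,
      Zsqrtd.re_star, Zsqrtd.im_star, Zsqrtd.re_sub, Zsqrtd.im_sub, Zsqrtd.re_one,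
      Zsqrtd.im_one, Zsqrtd.re_neg, Zsqrtd.im_neg, Zsqrtd.re_ofNat, Zsqrtd.im_ofNat,
      Zsqrtd.sqrtd] at h
    obtain ⟨h1, h2⟩ := h
    ring_nf at h1 h2
    have hp2 : p^2 + q^2 ≤ 2 := by
      nlinarith [sq_nonneg (2*r - p + q), sq_nonneg (2*s - p - q)]
    have hr2 : r^2 + s^2 ≤ 2 := by
      nlinarith [sq_nonneg (2*p - r - s), sq_nonneg (2*q + r - s)]
    apply mem_V <;>
      first
        | nlinarith [hp2, sq_nonneg p, sq_nonneg q]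
        | nlinarith [hr2, sq_nonneg r, sq_nonneg s]

lemma mem_T1 {p : Lz × Lz} (h1 : hz p.1 p.1 = -2) (h2 : hz p.2 p.2 = -2)
    (h3 : hz p.1 p.2 = 1 - gi) : p ∈ T1 :=
  Finset.mem_filter.2 ⟨Finset.mem_product.2 ⟨norm2_mem h1, norm2_mem h2⟩, h3⟩

lemma hz_ee11 : hz ((1:GaussianInt), (0:GaussianInt)) ((1:GaussianInt), (0:GaussianInt)) = -2 := by
  decide

lemma hz_ee22 : hz ((0:GaussianInt), (1:GaussianInt)) ((0:GaussianInt), (1:GaussianInt)) = -2 := by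
  decide

lemma hz_ee12 : hz ((1:GaussianInt), (0:GaussianInt)) ((0:GaussianInt), (1:GaussianInt)) = 1 - gi := by
  decide

lemma main_set_eq : {A : Lz → Lz | IsIsomLz A} = applyP '' ↑T := by
  ext A
  constructor
  · rintro ⟨hbij, hadd, hsmul, hform⟩
    obtain ⟨B, hBl, hBr⟩ := Function.bijective_iff_has_inverse.1 hbij
    have hA : ∀ x, A x = applyP (A (1,0), A (0,1)) x := by
      intro x
      have hx : A x = A (x.1 • ((1:GaussianInt),(0:GaussianInt)) +
          x.2 • ((0:GaussianInt),(1:GaussianInt))) := by rw [← decomp x]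
      rw [hx, hadd, hsmul, hsmul]
      rfl
    have hBadd : ∀ x y, B (x + y) = B x + B y := fun x y =>
      hbij.1 (by rw [hBr, hadd, hBr, hBr])
    have hBsmul : ∀ (c : GaussianInt) x, B (c • x) = c • B x := fun c x =>
      hbij.1 (by rw [hBr, hsmul, hBr])
    have hB : ∀ x, B x = applyP (B (1,0), B (0,1)) x := by
      intro x
      have hx : B x = B (x.1 • ((1:GaussianInt),(0:GaussianInt)) +
          x.2 • ((0:GaussianInt),(1:GaussianInt))) := by rw [← decomp x]
      rw [hx, hBadd, hBsmul, hBsmul]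
      rfl
    have hformB : ∀ x y, hz (B x) (B y) = hz x y := by
      intro x y
      rw [← hform (B x) (B y), hBr, hBr]
    refine ⟨(A (1,0), A (0,1)), ?_, (funext fun x => (hA x).symm)⟩
    refine Finset.mem_coe.2 (Finset.mem_filter.2 ⟨?_, ⟨(B (1,0), B (0,1)), ?_, ?_, ?_⟩⟩)
    · exact mem_T1 (by rw [hform]; exact hz_ee11) (by rw [hform]; exact hz_ee22)
        (by rw [hform]; exact hz_ee12)
    · exact mem_T1 (by rw [hformB]; exact hz_ee11) (by rw [hformB]; exact hz_ee22)
        (by rw [hformB]; exact hz_ee12)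
    · show (applyP _ (B (1,0)), applyP _ (B (0,1))) = ee
      rw [← hA (B (1,0)), ← hA (B (0,1)), hBr, hBr]
      rfl
    · show (applyP _ (A (1,0)), applyP _ (A (0,1))) = ee
      rw [← hB (A (1,0)), ← hB (A (0,1)), hBl, hBl]
      rfl
  · rintro ⟨p, hp, rfl⟩
    obtain ⟨hp1, q, hq, hpq, hqp⟩ := Finset.mem_filter.1 (Finset.mem_coe.1 hp)
    obtain ⟨hpmem, h12⟩ := Finset.mem_filter.1 hp1
    obtain ⟨hm1, hm2⟩ := Finset.mem_product.1 hpmem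
    have h11 : hz p.1 p.1 = -2 := (Finset.mem_filter.1 hm1).2
    have h22 : hz p.2 p.2 = -2 := (Finset.mem_filter.1 hm2).2
    have h21 : hz p.2 p.1 = 1 + gi := by
      rw [hz_star, h12]
      decide
    refine ⟨Function.bijective_iff_has_inverse.2 ⟨applyP q, ?_, ?_⟩,
      applyP_add p, applyP_smul p, ?_⟩
    · intro x
      rw [applyP_comp, hqp, applyP_ee]
    · intro x
      rw [applyP_comp, hpq, applyP_ee]
    · intro x y
      rw [hz_applyP, h11, h22, h12, h21]
      simp only [hz]
      ring

lemma applyP_injective : Function.Injective (applyP : Lz × Lz → Lz → Lz) := by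
  intro p q h
  have h1 := congrFun h (1, 0)
  have h2 := congrFun h (0, 1)
  rw [applyP_e1, applyP_e1] at h1
  rw [applyP_e2, applyP_e2] at h2
  exact Prod.ext h1 h2

set_option maxRecDepth 100000 in
lemma T_card : T.card = 96 := by decide

end Stmt8Aux

/-- The isometry group `Isom(L_z)` of the Gaussian lattice `L_z`
has exactly `96` elements. -/
theorem stmt8 : {A : Lz → Lz | IsIsomLz A}.ncard = 96 := by
  rw [Stmt8Aux.main_set_eq, Set.ncard_image_of_injective _ Stmt8Aux.applyP_injective,
    Set.ncard_coe_finset, Stmt8Aux.T_card]
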